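/- Let r > 1, r' := r/(r-1), and let Ω ⊂ ℝ^d be a measurable set of finite Lebesgue measure. Let m : Ω → ℝ be measurable with m ≥ 0 a.e. and w : Ω → ℝ^d measurable. For k ∈ ℕ set A_{r',k} := { (a,b) ∈ ℝ × ℝ^d : a + (1/r')|b|^{r'} ≤ 0, a ≥ -k, max_{1≤i≤d}|b_i| ≤ k }. Then the extended-real integrals ∫_Ω sup_{(a,b)∈A_{r',k}} ( a·m(x) + b·w(x) ) dx form a nondecreasing sequence in k whose limit is ∫_Ω ℓ_r(m(x),w(x)) dx. -/

import Mathlib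

open MeasureTheory Filter
open scoped RealInnerProductSpace Classical ENNReal Topology

/-- The function `ℓ_r`, with values in `[0,∞]`. -/
noncomputable def ellENN (r : ℝ) (d : ℕ) (a : ℝ) (b : EuclideanSpace ℝ (Fin d)) : ℝ≥0∞ :=
  if 0 < a then ENNReal.ofReal ((1 / r) * ‖b‖ ^ r / a ^ (r - 1))
  else if a = 0 ∧ b = 0 then 0
  else ⊤

lemma aux_coord_le_norm {d : ℕ} (v : EuclideanSpace ℝ (Fin d)) (i : Fin d) : |v i| ≤ ‖v‖ := by
  rw [EuclideanSpace.norm_eq, ← Real.sqrt_sq_eq_abs]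
  apply Real.sqrt_le_sqrt
  have h := Finset.single_le_sum (f := fun j => ‖v j‖ ^ 2)
    (fun j _ => sq_nonneg _) (Finset.mem_univ i)
  simpa [Real.norm_eq_abs, sq_abs] using h

lemma aux_norm_le {d : ℕ} (v : EuclideanSpace ℝ (Fin d)) {k : ℝ} (hk : 0 ≤ k)
    (h : ∀ i, |v i| ≤ k) : ‖v‖ ≤ Real.sqrt d * k := by
  rw [EuclideanSpace.norm_eq]
  have hsum : ∑ j, ‖v j‖ ^ 2 ≤ (d : ℝ) * k ^ 2 := by
    calc ∑ j, ‖v j‖ ^ 2 ≤ ∑ _j : Fin d, k ^ 2 :=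
          Finset.sum_le_sum (fun j _ => by
            rw [Real.norm_eq_abs]
            exact pow_le_pow_left₀ (abs_nonneg _) (h j) 2)
      _ = (d : ℝ) * k ^ 2 := by simp [Finset.sum_const, Finset.card_univ]
  calc Real.sqrt (∑ j, ‖v j‖ ^ 2) ≤ Real.sqrt ((d : ℝ) * k ^ 2) := Real.sqrt_le_sqrt hsum
    _ = Real.sqrt d * k := by rw [Real.sqrt_mul (by positivity), Real.sqrt_sq hk]

lemma aux_dense_sSup {α : Type*} [TopologicalSpace α] {f : α → ℝ} (hf : Continuous f)
    {T S : Set α} (hTS : T ⊆ S) (hST : S ⊆ closure T) (hS : S.Nonempty)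
    (hbdd : BddAbove (f '' S)) : sSup (f '' S) = sSup (f '' T) := by
  have hT : T.Nonempty := by
    rcases T.eq_empty_or_nonempty with h | h
    · exfalso
      rcases hS with ⟨p, hp⟩
      have := hST hp
      rw [h, closure_empty] at this
      exact this
    · exact h
  have hbT : BddAbove (f '' T) := hbdd.mono (Set.image_mono hTS)
  refine le_antisymm ?_ (csSup_le_csSup hbdd (hT.image f) (Set.image_mono hTS))
  refine csSup_le (hS.image f) ?_
  rintro y ⟨p, hp, rfl⟩
  have h1 : f p ∈ closure (f '' T) :=
    image_closure_subset_closure_image hf (Set.mem_image_of_mem f (hST hp))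
  have h2 : closure (f '' T) ⊆ Set.Iic (sSup (f '' T)) :=
    closure_minimal (fun z hz => le_csSup hbT hz) isClosed_Iic
  exact h2 h1

theorem stmt_2 (r : ℝ) (hr : 1 < r) (d : ℕ)
    (Ω : Set (EuclideanSpace ℝ (Fin d))) (hΩ : MeasurableSet Ω) (hfin : volume Ω < ⊤)
    (m : EuclideanSpace ℝ (Fin d) → ℝ)
    (w : EuclideanSpace ℝ (Fin d) → EuclideanSpace ℝ (Fin d))
    (hm : Measurable m) (hw : Measurable w)
    (hm0 : ∀ᵐ x ∂volume.restrict Ω, 0 ≤ m x) :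
    let r' : ℝ := r / (r - 1)
    let A : ℕ → Set (ℝ × EuclideanSpace ℝ (Fin d)) := fun k =>
      {p | p.1 + (1 / r') * ‖p.2‖ ^ r' ≤ 0 ∧ -(k : ℝ) ≤ p.1 ∧ ∀ i, |p.2 i| ≤ (k : ℝ)}
    let I : ℕ → ℝ≥0∞ := fun k => ∫⁻ x in Ω, ENNReal.ofReal
      (sSup ((fun p : ℝ × EuclideanSpace ℝ (Fin d) => p.1 * m x + ⟪p.2, w x⟫) '' A k))
    Monotone I ∧ Tendsto I atTop (𝓝 (∫⁻ x in Ω, ellENN r d (m x) (w x))) := by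
  intro r' A I
  have hrpos : (0:ℝ) < r := one_pos.trans hr
  have hc : r.HolderConjugate r' := (Real.holderConjugate_iff_eq_conjExponent hr).2 rfl
  have hr'1 : (1:ℝ) < r' := hc.symm.lt
  have hr'pos : (0:ℝ) < r' := hc.symm.pos
  set g : EuclideanSpace ℝ (Fin d) → ℝ × EuclideanSpace ℝ (Fin d) → ℝ :=
    fun x p => p.1 * m x + ⟪p.2, w x⟫ with hg
  set f : ℕ → EuclideanSpace ℝ (Fin d) → ℝ := fun k x => sSup (g x '' A k) with hf
  have hI : ∀ k, I k = ∫⁻ x in Ω, ENNReal.ofReal (f k x) := fun k => rfl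
  have hA0 : ∀ k, ((0:ℝ), (0 : EuclideanSpace ℝ (Fin d))) ∈ A k := by
    intro k
    refine ⟨?_, by simp, by simp⟩
    simp [Real.zero_rpow hr'pos.ne']
  have hAne : ∀ k, (A k).Nonempty := fun k => ⟨_, hA0 k⟩
  have hAmono : Monotone A := by
    intro k l hkl p hp
    obtain ⟨h1, h2, h3⟩ := hp
    have hcast : (k : ℝ) ≤ (l : ℝ) := Nat.cast_le.2 hkl
    exact ⟨h1, le_trans (neg_le_neg hcast) h2, fun i => (h3 i).trans hcast⟩
  have hub : ∀ k x p, p ∈ A k → g x p ≤ (k : ℝ) * |m x| + (Real.sqrt d * k) * ‖w x‖ := by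
    intro k x p hp
    obtain ⟨h1, h2, h3⟩ := hp
    have hp1 : p.1 ≤ 0 := by
      have h0 : 0 ≤ (1 / r') * ‖p.2‖ ^ r' := by positivity
      linarith
    have habs : |p.1| ≤ (k : ℝ) := abs_le.2 ⟨h2, hp1.trans (Nat.cast_nonneg k)⟩
    have hb : ‖p.2‖ ≤ Real.sqrt d * k := aux_norm_le p.2 (Nat.cast_nonneg k) h3
    have e1 : p.1 * m x ≤ (k : ℝ) * |m x| := by
      calc p.1 * m x ≤ |p.1 * m x| := le_abs_self _
        _ = |p.1| * |m x| := abs_mul _ _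
        _ ≤ (k : ℝ) * |m x| := mul_le_mul_of_nonneg_right habs (abs_nonneg _)
    have e2 : ⟪p.2, w x⟫ ≤ (Real.sqrt d * k) * ‖w x‖ :=
      (real_inner_le_norm _ _).trans (mul_le_mul_of_nonneg_right hb (norm_nonneg _))
    exact add_le_add e1 e2
  have hBdd : ∀ k x, BddAbove (g x '' A k) := by
    intro k x
    refine ⟨(k : ℝ) * |m x| + (Real.sqrt d * k) * ‖w x‖, ?_⟩
    rintro y ⟨p, hp, rfl⟩
    exact hub k x p hp
  have hfmono : ∀ x, Monotone fun k => f k x := fun x k l hkl =>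
    csSup_le_csSup (hBdd l x) ((hAne k).image _) (Set.image_mono (hAmono hkl))
  have hg0 : ∀ x, g x (0, 0) = 0 := by intro x; simp [hg]
  have hf0 : ∀ k x, 0 ≤ f k x := by
    intro k x
    have h := le_csSup (hBdd k x) (Set.mem_image_of_mem (g x) (hA0 k))
    rwa [hg0 x] at h
  have hgc : ∀ x, Continuous (g x) := fun x =>
    (continuous_fst.mul continuous_const).add (continuous_snd.inner continuous_const)
  -- measurability
  have hmeas : ∀ k, Measurable fun x => ENNReal.ofReal (f k x) := by
    intro k
    obtain ⟨T, hTsub, hTc, hTd⟩ :=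
      (TopologicalSpace.IsSeparable.of_separableSpace (A k)).exists_countable_dense_subset
    have hTne : T.Nonempty := by
      rcases T.eq_empty_or_nonempty with h | h
      · exfalso
        have := hTd (hA0 k)
        rw [h, closure_empty] at this
        exact this
      · exact h
    obtain ⟨e, he⟩ := hTc.exists_eq_range hTne
    have key : ∀ x, ENNReal.ofReal (f k x) = ⨆ n, ENNReal.ofReal (g x (e n)) := by
      intro x
      have h1 : f k x = sSup (g x '' T) :=
        aux_dense_sSup (hgc x) hTsub hTd (hAne k) (hBdd k x)
      have hbT : BddAbove (g x '' T) := (hBdd k x).mono (Set.image_mono hTsub)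
      have h2 : ENNReal.ofReal (sSup (g x '' T)) = sSup (ENNReal.ofReal '' (g x '' T)) :=
        Monotone.map_csSup_of_continuousAt ENNReal.continuous_ofReal.continuousAt
          (fun a b hab => ENNReal.ofReal_le_ofReal hab) (hTne.image _) hbT
      rw [h1, h2, he, ← Set.range_comp, ← Set.range_comp, sSup_range]
      rfl
    have hff : (fun x => ENNReal.ofReal (f k x))
        = fun x => ⨆ n, ENNReal.ofReal (g x (e n)) := funext key
    rw [hff]
    refine Measurable.iSup fun n => ENNReal.measurable_ofReal.comp ?_
    have hinner : Measurable fun x => ⟪(e n).2, w x⟫ :=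
      ((continuous_const.inner continuous_id).measurable).comp hw
    exact (hm.const_mul _).add hinner
  -- pointwise limit
  have hpt : ∀ x, 0 ≤ m x →
      (⨆ k, ENNReal.ofReal (f k x)) = ellENN r d (m x) (w x) := by
    intro x hx
    rcases lt_or_eq_of_le hx with hM | hM
    · -- m x > 0
      set M := m x with hMdef
      set W := ‖w x‖ with hWdef
      have hWnn : 0 ≤ W := norm_nonneg _
      set Lval := (1 / r) * W ^ r / M ^ (r - 1) with hLdef
      have hdivc : r / r' = r - 1 := hc.div_conj_eq_sub_one
      have hUB : ∀ k p, p ∈ A k → g x p ≤ Lval := by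
        intro k p hp
        set B := ‖p.2‖ with hBdef
        have hBnn : 0 ≤ B := norm_nonneg _
        have h1 : p.1 * M ≤ -((1 / r') * B ^ r') * M :=
          mul_le_mul_of_nonneg_right (by linarith [hp.1]) hM.le
        have h2 : ⟪p.2, w x⟫ ≤ B * W := real_inner_le_norm _ _
        have hyoung := Real.young_inequality_of_nonneg
          (mul_nonneg hBnn (Real.rpow_nonneg hM.le (1 / r')))
          (mul_nonneg hWnn (Real.rpow_nonneg hM.le (-(1 / r')))) hc.symm
        have hMpow : M ^ (1 / r') * M ^ (-(1 / r')) = 1 := by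
          rw [← Real.rpow_add hM]; simp
        have e1 : B * M ^ (1 / r') * (W * M ^ (-(1 / r'))) = B * W := by
          calc B * M ^ (1 / r') * (W * M ^ (-(1 / r')))
              = B * W * (M ^ (1 / r') * M ^ (-(1 / r'))) := by ring
            _ = B * W := by rw [hMpow, mul_one]
        have e2 : (B * M ^ (1 / r')) ^ r' = B ^ r' * M := by
          rw [Real.mul_rpow hBnn (Real.rpow_nonneg hM.le _), ← Real.rpow_mul hM.le,
            one_div, inv_mul_cancel₀ hr'pos.ne', Real.rpow_one]
        have hexp : -(1 / r') * r = -(r - 1) := by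
          rw [← hdivc]; ring
        have e3 : (W * M ^ (-(1 / r'))) ^ r = W ^ r * (M ^ (r - 1))⁻¹ := by
          rw [Real.mul_rpow hWnn (Real.rpow_nonneg hM.le _), ← Real.rpow_mul hM.le,
            hexp, Real.rpow_neg hM.le]
        rw [e1, e2, e3] at hyoung
        have hLeq : Lval = W ^ r * (M ^ (r - 1))⁻¹ / r := by rw [hLdef]; ring
        have hgxp : g x p = p.1 * M + ⟪p.2, w x⟫ := rfl
        have hY : B * W ≤ (1 / r') * B ^ r' * M + Lval := by
          rw [hLeq]
          calc B * W ≤ B ^ r' * M / r' + W ^ r * (M ^ (r - 1))⁻¹ / r := hyoung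
            _ = (1 / r') * B ^ r' * M + W ^ r * (M ^ (r - 1))⁻¹ / r := by ring
        rw [hgxp]
        linarith
      have hfle : ∀ k, f k x ≤ Lval := fun k =>
        csSup_le ((hAne k).image _) (by rintro y ⟨p, hp, rfl⟩; exact hUB k p hp)
      have hattain : ∃ k₀, Lval ≤ f k₀ x := by
        rcases eq_or_lt_of_le hWnn with hW0 | hW
        · refine ⟨0, ?_⟩
          have hLz : Lval = 0 := by
            rw [hLdef, ← hW0, Real.zero_rpow hrpos.ne']; ring
          rw [hLz]; exact hf0 0 x
        · set c := W ^ (r - 2) * M ^ (1 - r) with hcdef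
          have hcpos : 0 < c := by positivity
          set bs : EuclideanSpace ℝ (Fin d) := c • w x with hbs
          have hWr1 : W ^ (r - 2) * W = W ^ (r - 1) := by
            have h := Real.rpow_add hW (r - 2) 1
            rw [Real.rpow_one] at h
            rw [← h, show r - 2 + 1 = r - 1 by ring]
          have hbnorm : ‖bs‖ = W ^ (r - 1) * M ^ (1 - r) := by
            rw [hbs, norm_smul, Real.norm_eq_abs, abs_of_pos hcpos, hcdef,
              mul_right_comm, hWr1]
          have hinner2 : ⟪bs, w x⟫ = W ^ r * M ^ (1 - r) := by
            rw [hbs, real_inner_smul_left, real_inner_self_eq_norm_sq, hcdef, ← hWdef]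
            rw [show W ^ (2 : ℕ) = W ^ ((2 : ℕ) : ℝ) from (Real.rpow_natCast W 2).symm]
            rw [mul_right_comm, ← Real.rpow_add hW,
              show r - 2 + ((2 : ℕ) : ℝ) = r by push_cast; ring]
          have hnr' : ‖bs‖ ^ r' = W ^ r * M ^ (-r) := by
            rw [hbnorm, Real.mul_rpow (Real.rpow_nonneg hWnn _) (Real.rpow_nonneg hM.le _),
              ← Real.rpow_mul hWnn, ← Real.rpow_mul hM.le]
            have h1 : (r - 1) * r' = r := hc.sub_one_mul_conj
            have h2 : (1 - r) * r' = -r := by linear_combination -h1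
            rw [h1, h2]
          set as : ℝ := -((1 / r') * (W ^ r * M ^ (-r))) with has
          obtain ⟨k₀, hk₀⟩ := exists_nat_ge
            (max ((1 / r') * (W ^ r * M ^ (-r))) (W ^ (r - 1) * M ^ (1 - r)))
          have hmem : (as, bs) ∈ A k₀ := by
            refine ⟨?_, ?_, ?_⟩
            · show as + (1 / r') * ‖bs‖ ^ r' ≤ 0
              rw [hnr', has]; linarith
            · show -(k₀ : ℝ) ≤ as
              rw [has]
              have h := (le_max_left ((1 / r') * (W ^ r * M ^ (-r)))
                (W ^ (r - 1) * M ^ (1 - r))).trans hk₀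
              linarith
            · intro i
              have h1 := aux_coord_le_norm bs i
              rw [hbnorm] at h1
              have h2 := (le_max_right ((1 / r') * (W ^ r * M ^ (-r)))
                (W ^ (r - 1) * M ^ (1 - r))).trans hk₀
              linarith
          have hval : g x (as, bs) = Lval := by
            have hgg : g x (as, bs) = as * M + ⟪bs, w x⟫ := rfl
            rw [hgg, hinner2, has]
            have hMr : M ^ (-r) * M = M ^ (1 - r) := by
              have h := Real.rpow_add hM (-r) 1
              rw [Real.rpow_one] at h
              rw [← h, show -r + 1 = 1 - r by ring]
            have hM1r : M ^ (1 - r) = (M ^ (r - 1))⁻¹ := by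
              rw [show (1 - r) = -(r - 1) by ring, Real.rpow_neg hM.le]
            have hr'inv : 1 - 1 / r' = 1 / r := by
              have h := hc.inv_add_inv_eq_one
              rw [one_div, one_div]; linarith
            have key : -((1 / r') * (W ^ r * M ^ (-r))) * M + W ^ r * M ^ (1 - r)
                = (1 - 1 / r') * (W ^ r * M ^ (1 - r)) := by
              rw [← hMr]; ring
            rw [key, hr'inv, hM1r, hLdef]; ring
          exact ⟨k₀, hval ▸ le_csSup (hBdd k₀ x) (Set.mem_image_of_mem _ hmem)⟩
      obtain ⟨k₀, hk₀⟩ := hattain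
      have hEll : ellENN r d M (w x) = ENNReal.ofReal Lval := by
        unfold ellENN
        rw [if_pos hM, hLdef, ← hWdef]
      refine le_antisymm ?_ ?_
      · rw [hEll]
        exact iSup_le fun k => ENNReal.ofReal_le_ofReal (hfle k)
      · rw [hEll]
        exact le_trans (ENNReal.ofReal_le_ofReal hk₀)
          (le_iSup (fun k => ENNReal.ofReal (f k x)) k₀)
    · -- m x = 0
      have hM' : m x = 0 := hM.symm
      rcases eq_or_ne (w x) 0 with hwx | hwx
      · have hgz : ∀ p, g x p = 0 := by intro p; simp [hg, hM', hwx]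
        have hfz : ∀ k, f k x = 0 := by
          intro k
          have himg : g x '' A k = {0} := by
            rw [show g x = fun _ => (0 : ℝ) from funext hgz]
            exact (hAne k).image_const 0
          show sSup (g x '' A k) = 0
          rw [himg, csSup_singleton]
        simp [hfz, ellENN, hM', hwx]
      · have hW : 0 < ‖w x‖ := norm_pos_iff.2 hwx
        have hEll : ellENN r d (m x) (w x) = ⊤ := by
          simp [ellENN, hM', hwx]
        rw [hEll, iSup_eq_top]
        intro b hb
        have htend : Tendsto (fun k : ℕ => ((k : ℝ) ^ (1 / r')) * ‖w x‖) atTop atTop :=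
          ((tendsto_rpow_atTop (by positivity)).comp tendsto_natCast_atTop_atTop).atTop_mul_const hW
        obtain ⟨k, hk1, hk2⟩ :=
          ((htend.eventually_gt_atTop b.toReal).and (eventually_ge_atTop 1)).exists
        refine ⟨k, ?_⟩
        have hfk : (k : ℝ) ^ (1 / r') * ‖w x‖ ≤ f k x := by
          set t := (k : ℝ) ^ (1 / r') with htdef
          have ht0 : 0 ≤ t := Real.rpow_nonneg (Nat.cast_nonneg k) _
          have hpnorm : ‖(t / ‖w x‖) • w x‖ = t := by
            rw [norm_smul, Real.norm_eq_abs, abs_of_nonneg (div_nonneg ht0 hW.le),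
              div_mul_cancel₀ _ hW.ne']
          have htr' : t ^ r' = (k : ℝ) := by
            rw [htdef, ← Real.rpow_mul (Nat.cast_nonneg k), one_div,
              inv_mul_cancel₀ hr'pos.ne', Real.rpow_one]
          have hmem : (-((1 / r') * t ^ r'), (t / ‖w x‖) • w x) ∈ A k := by
            refine ⟨?_, ?_, ?_⟩
            · show -((1 / r') * t ^ r') + (1 / r') * ‖(t / ‖w x‖) • w x‖ ^ r' ≤ 0
              rw [hpnorm]; linarith
            · show -(k : ℝ) ≤ -((1 / r') * t ^ r')
              rw [htr']
              have h1 : (1 / r') * (k : ℝ) ≤ 1 * (k : ℝ) :=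
                mul_le_mul_of_nonneg_right (by rw [div_le_one hr'pos]; linarith)
                  (Nat.cast_nonneg k)
              linarith
            · intro i
              have h1 := aux_coord_le_norm ((t / ‖w x‖) • w x) i
              rw [hpnorm] at h1
              have h2 : t ≤ (k : ℝ) := by
                calc t = (k : ℝ) ^ (1 / r') := htdef
                  _ ≤ (k : ℝ) ^ (1 : ℝ) := Real.rpow_le_rpow_of_exponent_le
                      (by exact_mod_cast hk2)
                      (by rw [div_le_one hr'pos]; linarith)
                  _ = (k : ℝ) := Real.rpow_one _
              linarith
          have hval : g x (-((1 / r') * t ^ r'), (t / ‖w x‖) • w x) = t * ‖w x‖ := by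
            have hgg : g x (-((1 / r') * t ^ r'), (t / ‖w x‖) • w x)
                = -((1 / r') * t ^ r') * m x + ⟪(t / ‖w x‖) • w x, w x⟫ := rfl
            rw [hgg, hM', real_inner_smul_left, real_inner_self_eq_norm_sq]
            field_simp
            ring
          exact hval ▸ le_csSup (hBdd k x) (Set.mem_image_of_mem _ hmem)
        have hlt : b < ENNReal.ofReal ((k : ℝ) ^ (1 / r') * ‖w x‖) := by
          rw [ENNReal.lt_ofReal_iff_toReal_lt hb.ne]
          exact hk1
        exact hlt.trans_le (ENNReal.ofReal_le_ofReal hfk)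
  have monI : Monotone I := by
    intro k l hkl
    rw [hI k, hI l]
    exact lintegral_mono fun x => ENNReal.ofReal_le_ofReal (hfmono x hkl)
  refine ⟨monI, ?_⟩
  have hIfun : I = fun k => ∫⁻ x in Ω, ENNReal.ofReal (f k x) := funext hI
  have hlim : ∫⁻ x in Ω, ellENN r d (m x) (w x) = ⨆ k, I k := by
    have h1 : ∫⁻ x in Ω, ellENN r d (m x) (w x)
        = ∫⁻ x in Ω, ⨆ k, ENNReal.ofReal (f k x) :=
      lintegral_congr_ae (hm0.mono fun x hx => (hpt x hx).symm)
    rw [h1, lintegral_iSup hmeas (fun k l hkl x => ENNReal.ofReal_le_ofReal (hfmono x hkl)), hIfun]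
  rw [hlim]
  exact tendsto_atTop_iSup monI
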